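/- The map ψ on M₃(ℂ) defined by keeping diagonal entries fixed and multiplying off-diagonal entries by −½ (ψ(a)_{ii} = a_{ii}, ψ(a)_{ij} = −½ a_{ij} for i ≠ j) is a positive, trace-preserving, unital linear map. -/

import Mathlib

open ComplexOrder

noncomputable def psiMap (a : Matrix (Fin 3) (Fin 3) ℂ) : Matrix (Fin 3) (Fin 3) ℂ :=
  Matrix.of fun i j => if i = j then a i j else -(1 / 2 : ℂ) * a i j

noncomputable section
open Matrix
namespace PsiAux

def omg : ℂ := ⟨-1/2, Real.sqrt 3 / 2⟩

lemma omg_sq : omg ^ 2 = ⟨-1/2, -(Real.sqrt 3 / 2)⟩ := by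
  have h3 : Real.sqrt 3 * Real.sqrt 3 = 3 := Real.mul_self_sqrt (by norm_num)
  rw [pow_two]
  apply Complex.ext <;> simp [omg, Complex.mul_re, Complex.mul_im] <;> nlinarith [h3]

lemma omg_conj : (starRingEnd ℂ) omg = omg ^ 2 := by
  rw [omg_sq]; apply Complex.ext <;> simp [omg]

lemma omg_sum : omg + omg ^ 2 = -1 := by
  rw [omg_sq]; apply Complex.ext <;> simp [omg]

lemma omg_cube : omg ^ 3 = 1 := by
  have h3 : Real.sqrt 3 * Real.sqrt 3 = 3 := Real.mul_self_sqrt (by norm_num)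
  have h : omg ^ 3 = omg ^ 2 * omg := by ring
  rw [h, omg_sq]
  apply Complex.ext <;> simp [omg, Complex.mul_re, Complex.mul_im] <;> nlinarith [h3]

def Um : Matrix (Fin 3) (Fin 3) ℂ :=
  Matrix.diagonal (fun i => omg ^ (i : ℕ))

lemma key (i j : Fin 3) (hij : i ≠ j) :
    omg ^ (i : ℕ) * (starRingEnd ℂ) (omg ^ (j : ℕ)) +
      (starRingEnd ℂ) (omg ^ (i : ℕ)) * omg ^ (j : ℕ) = -1 := by
  fin_cases i <;> fin_cases j <;>
    simp_all [map_pow, omg_conj] <;>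
    first
      | linear_combination omg_sum
      | linear_combination omg_sum + omg * omg_cube
      | linear_combination omg_sum + (omg ^ 2 + omg) * omg_cube

lemma omg_mul_conj : omg * (starRingEnd ℂ) omg = 1 := by
  rw [omg_conj]; linear_combination omg_cube

lemma hmod (n : ℕ) : omg ^ n * (starRingEnd ℂ) (omg ^ n) = 1 := by
  rw [map_pow, ← mul_pow, omg_mul_conj, one_pow]

lemma psi_eq (a : Matrix (Fin 3) (Fin 3) ℂ) :
    psiMap a = (1/2 : ℂ) • (Um * a * Umᴴ + Umᴴ * a * Um) := by
  ext i j
  simp only [Um, Matrix.diagonal_conjTranspose, Matrix.diagonal_mul, Matrix.mul_diagonal,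
    Matrix.smul_apply, Matrix.add_apply, psiMap, Matrix.of_apply, Pi.star_apply, smul_eq_mul,
    RCLike.star_def]
  by_cases h : i = j
  · subst h
    simp only [if_true]
    linear_combination (- a i i) * hmod (i : ℕ)
  · simp only [h, if_false]
    linear_combination (-(a i j)/2) * key i j h

end PsiAux
end

/-- The map `ψ` is a positive, trace-preserving, unital linear map on `M₃(ℂ)`. -/
theorem stmt_12 :
    IsLinearMap ℂ psiMap ∧
    (∀ a : Matrix (Fin 3) (Fin 3) ℂ, Matrix.trace (psiMap a) = Matrix.trace a) ∧
    psiMap 1 = 1 ∧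
    (∀ a : Matrix (Fin 3) (Fin 3) ℂ, a.PosSemidef → (psiMap a).PosSemidef) := by
  refine ⟨⟨fun a b => ?_, fun c a => ?_⟩, fun a => ?_, ?_, fun a ha => ?_⟩
  · ext i j; by_cases h : i = j <;> simp [psiMap, h] <;> ring
  · ext i j; by_cases h : i = j <;> simp [psiMap, h] <;> ring
  · simp [Matrix.trace, psiMap, Matrix.diag]
  · ext i j; by_cases h : i = j <;> simp [psiMap, h, Matrix.one_apply]
  · rw [PsiAux.psi_eq]
    have h1 : (PsiAux.Um * a * PsiAux.Um.conjTranspose + PsiAux.Um.conjTranspose * a * PsiAux.Um).PosSemidef :=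
      (ha.mul_mul_conjTranspose_same PsiAux.Um).add (ha.conjTranspose_mul_mul_same PsiAux.Um)
    constructor
    · simp only [Matrix.IsHermitian, Matrix.conjTranspose_smul]
      rw [h1.isHermitian.eq]
      norm_num
    · intro x
      exact (h1.smul (by norm_num [Complex.le_def] : (0:ℂ) ≤ 1/2)).2 x
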